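/- Let F = (1/n)∑ᵢ fᵢ with each fᵢ convex differentiable with Lᵢ-Lipschitz gradient (Lᵢ > 0), L̄ = (1/n)∑ᵢ Lᵢ, qᵢ = Lᵢ/(n L̄). Let R : ℝ^d → ℝ be μ-strongly convex (μ ≥ 0) and let x* be a minimizer of P = F + R, at which the first-order optimality condition ∇F(x*) + ξ* = 0 holds for some subgradient ξ* ∈ ∂R(x*). Then for all x ∈ ℝ^d, (1/n)∑ᵢ (1/(n qᵢ))‖∇fᵢ(x) − ∇fᵢ(x*)‖² ≤ 2L̄ (P(x) − P(x*) − (μ/2)‖x − x*‖²). -/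

import Mathlib

open RealInnerProductSpace

/-- `ξ` is a subgradient of the convex function `R` at `x`. -/
def HasSubgradientAt {d : ℕ} (R : EuclideanSpace ℝ (Fin d) → ℝ)
    (ξ x : EuclideanSpace ℝ (Fin d)) : Prop :=
  ∀ y, R x + ⟪ξ, y - x⟫ ≤ R y

open Set

set_option linter.unusedSectionVars false


variable {E : Type*} [NormedAddCommGroup E] [InnerProductSpace ℝ E] [CompleteSpace E]

lemma aux_line_deriv {f : E → ℝ} {p : E} {gp : E} (hg : HasGradientAt f gp p)
    (x v : E) (t : ℝ) (hp : p = x + t • v) :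
    HasDerivAt (fun s : ℝ => f (x + s • v)) ⟪gp, v⟫ t := by
  have hline : HasDerivAt (fun s : ℝ => x + s • v) v t := by
    simpa using ((hasDerivAt_id t).smul_const v).const_add x
  have hf : HasFDerivAt f (InnerProductSpace.toDual ℝ E gp) p :=
    hasGradientAt_iff_hasFDerivAt.mp hg
  rw [hp] at hf
  have h2 := hf.comp_hasDerivAt t hline
  simp only [InnerProductSpace.toDual_apply_apply] at h2
  exact h2

lemma aux_line_convex {f : E → ℝ} (hconv : ConvexOn ℝ univ f) (x v : E) :
    ConvexOn ℝ univ (fun s : ℝ => f (x + s • v)) := by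
  refine ⟨convex_univ, fun s _ t _ a b ha hb hab => ?_⟩
  have key : x + (a • s + b • t) • v = a • (x + s • v) + b • (x + t • v) := by
    have : x = a • x + b • x := by rw [← add_smul, hab, one_smul]
    calc x + (a • s + b • t) • v = (a + b) • x + (a * s + b * t) • v := by
          rw [hab, one_smul]; simp [smul_eq_mul]
      _ = a • (x + s • v) + b • (x + t • v) := by module
  simp only []
  rw [key]
  simpa using hconv.2 (mem_univ (x + s • v)) (mem_univ (x + t • v)) ha hb hab

lemma aux_convex_grad {f : E → ℝ} (hconv : ConvexOn ℝ univ f) {gx : E} {x : E}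
    (hx : HasGradientAt f gx x) (y : E) : f x + ⟪gx, y - x⟫ ≤ f y := by
  have hg := aux_line_convex hconv x (y - x)
  have hd : HasDerivAt (fun s : ℝ => f (x + s • (y - x))) ⟪gx, y - x⟫ 0 :=
    aux_line_deriv hx x (y - x) 0 (by simp)
  have := hg.le_slope_of_hasDerivAt (mem_univ (0:ℝ)) (mem_univ 1) zero_lt_one hd
  rw [slope_def_field] at this
  simp only [zero_smul, add_zero, one_smul, add_sub_cancel, sub_zero, div_one] at this
  linarith

lemma aux_descent {f : E → ℝ} {g : E → E} (hg : ∀ z, HasGradientAt f (g z) z)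
    {L : ℝ} (hL : 0 ≤ L) (hlip : ∀ u v, ‖g u - g v‖ ≤ L * ‖u - v‖) (x y : E) :
    f y ≤ f x + ⟪g x, y - x⟫ + L / 2 * ‖y - x‖ ^ 2 := by
  set v := y - x with hv
  have hgcont : Continuous g := by
    refine (LipschitzWith.of_dist_le_mul (K := L.toNNReal) fun u w => ?_).continuous
    rw [Real.coe_toNNReal L hL, dist_eq_norm, dist_eq_norm]
    exact hlip u w
  have hderiv : ∀ t : ℝ, HasDerivAt (fun s : ℝ => f (x + s • v))
      ⟪g (x + t • v), v⟫ t := fun t => aux_line_deriv (hg _) x v t rfl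
  have hcont : Continuous fun t : ℝ => ⟪g (x + t • v), v⟫ := by
    apply Continuous.inner
    · exact hgcont.comp (by continuity)
    · exact continuous_const
  have hftc : ∫ t in (0:ℝ)..1, ⟪g (x + t • v), v⟫ = f (x + (1:ℝ) • v) - f (x + (0:ℝ) • v) :=
    intervalIntegral.integral_eq_sub_of_hasDerivAt (fun t _ => hderiv t)
      (hcont.intervalIntegrable 0 1)
  have hbound : ∫ t in (0:ℝ)..1, ⟪g (x + t • v), v⟫ ≤
      ∫ t in (0:ℝ)..1, (⟪g x, v⟫ + L * ‖v‖ ^ 2 * t) := by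
    apply intervalIntegral.integral_mono_on zero_le_one (hcont.intervalIntegrable 0 1)
      ((by continuity : Continuous fun t : ℝ => ⟪g x, v⟫ + L * ‖v‖ ^ 2 * t).intervalIntegrable 0 1)
    intro t ht
    have h1 : ⟪g (x + t • v), v⟫ - ⟪g x, v⟫ = ⟪g (x + t • v) - g x, v⟫ := by
      rw [inner_sub_left]
    have h2 : ⟪g (x + t • v) - g x, v⟫ ≤ ‖g (x + t • v) - g x‖ * ‖v‖ :=
      real_inner_le_norm _ _
    have h3 : ‖g (x + t • v) - g x‖ ≤ L * (t * ‖v‖) := by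
      have := hlip (x + t • v) x
      simpa [norm_smul, abs_of_nonneg ht.1] using this
    nlinarith [norm_nonneg v, mul_le_mul_of_nonneg_right h3 (norm_nonneg v)]
  have hint : ∫ t in (0:ℝ)..1, (⟪g x, v⟫ + L * ‖v‖ ^ 2 * t) = ⟪g x, v⟫ + L / 2 * ‖v‖ ^ 2 := by
    rw [intervalIntegral.integral_add (intervalIntegrable_const)
      ((by continuity : Continuous fun t : ℝ => L * ‖v‖ ^ 2 * t).intervalIntegrable 0 1)]
    rw [intervalIntegral.integral_const, intervalIntegral.integral_const_mul,
      integral_id]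
    norm_num
    ring
  have e0 : x + (0:ℝ) • v = x := by simp
  have e1 : x + (1:ℝ) • v = y := by simp [hv]
  rw [e0, e1] at hftc
  linarith [hbound.trans_eq hint, hftc]

lemma aux_inner_concave (c : E) : ConcaveOn ℝ univ (fun z : E => ⟪c, z⟫) := by
  refine ⟨convex_univ, fun p _ q _ a b ha hb hab => le_of_eq ?_⟩
  simp [inner_add_right, real_inner_smul_right, smul_eq_mul]

lemma aux_coco {f : E → ℝ} {g : E → E} (hconv : ConvexOn ℝ univ f)
    (hg : ∀ z, HasGradientAt f (g z) z) {L : ℝ} (hL : 0 < L)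
    (hlip : ∀ u v, ‖g u - g v‖ ≤ L * ‖u - v‖) (x y : E) :
    ‖g x - g y‖ ^ 2 ≤ 2 * L * (f x - f y - ⟪g y, x - y⟫) := by
  set c := g y with hc
  set h : E → ℝ := fun w => f w - ⟪c, w⟫ with hh_def
  have hcf : HasFDerivAt (fun z : E => ⟪c, z⟫) (InnerProductSpace.toDual ℝ E c) x ∧ True := ⟨by
    have := (InnerProductSpace.toDual ℝ E c).hasFDerivAt (x := x)
    convert this using 1
    funext z
    simp [InnerProductSpace.toDual_apply_apply], trivial⟩
  have hh : ∀ z, HasGradientAt h (g z - c) z := by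
    intro z
    rw [hasGradientAt_iff_hasFDerivAt, map_sub]
    refine HasFDerivAt.sub (hg z).hasFDerivAt ?_
    have := (InnerProductSpace.toDual ℝ E c).hasFDerivAt (x := z)
    exact this
  have hhconv : ConvexOn ℝ univ h := hconv.sub (aux_inner_concave c)
  have hhlip : ∀ u v, ‖(g u - c) - (g v - c)‖ ≤ L * ‖u - v‖ := by
    intro u v; simpa [sub_sub_sub_cancel_right] using hlip u v
  have hmin : ∀ z, h y ≤ h z := by
    intro z
    have := aux_convex_grad hhconv (hh y) z
    simpa [← hc, sub_self, inner_zero_left] using this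
  set u := x - (L⁻¹) • (g x - c) with hu
  have hd := aux_descent hh hL.le hhlip x u
  have hux : u - x = -(L⁻¹ • (g x - c)) := by rw [hu]; abel
  have hi : ⟪g x - c, u - x⟫ = -(L⁻¹ * ‖g x - c‖ ^ 2) := by
    rw [hux, inner_neg_right, real_inner_smul_right, real_inner_self_eq_norm_sq]
  have hn : ‖u - x‖ ^ 2 = L⁻¹ ^ 2 * ‖g x - c‖ ^ 2 := by
    rw [hux, norm_neg, norm_smul, mul_pow]
    congr 1
    rw [Real.norm_eq_abs, sq_abs]
  have key : h y ≤ h x - 1 / (2 * L) * ‖g x - c‖ ^ 2 := by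
    have := (hmin u).trans hd
    rw [hi, hn] at this
    have hL' : L ≠ 0 := hL.ne'
    have : h y ≤ h x - L⁻¹ * ‖g x - c‖ ^ 2 + L / 2 * (L⁻¹ ^ 2 * ‖g x - c‖ ^ 2) := by linarith
    calc h y ≤ h x - L⁻¹ * ‖g x - c‖ ^ 2 + L / 2 * (L⁻¹ ^ 2 * ‖g x - c‖ ^ 2) := this
      _ = h x - 1 / (2 * L) * ‖g x - c‖ ^ 2 := by field_simp; ring
  have hdiffh : h x - h y = f x - f y - ⟪c, x - y⟫ := by
    simp only [hh_def, inner_sub_right]; ring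
  rw [← hdiffh]
  have h2L : 0 < 2 * L := by linarith
  calc ‖g x - c‖ ^ 2 = 2 * L * (1 / (2 * L) * ‖g x - c‖ ^ 2) := by field_simp
    _ ≤ 2 * L * (h x - h y) := by
        apply mul_le_mul_of_nonneg_left _ h2L.le
        linarith [key]

theorem gradient_norm_bound_by_objective_gap' (d n : ℕ) (hd : 0 < d) (hn : 0 < n)
    (f : Fin n → EuclideanSpace ℝ (Fin d) → ℝ) (L : Fin n → ℝ)
    (hL : ∀ i, 0 < L i)
    (hconv : ∀ i, ConvexOn ℝ Set.univ (f i))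
    (hdiff : ∀ i, Differentiable ℝ (f i))
    (hlip : ∀ i x y, ‖gradient (f i) x - gradient (f i) y‖ ≤ L i * ‖x - y‖)
    (Lbar : ℝ) (hLbar : Lbar = (1 / (n : ℝ)) * ∑ i, L i)
    (q : Fin n → ℝ) (hq : ∀ i, q i = L i / ((n : ℝ) * Lbar))
    (F : EuclideanSpace ℝ (Fin d) → ℝ)
    (hF : ∀ x, F x = (1 / (n : ℝ)) * ∑ i, f i x)
    (R : EuclideanSpace ℝ (Fin d) → ℝ) (μ : ℝ) (hμ : 0 ≤ μ)
    (hRconv : ConvexOn ℝ Set.univ R)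
    (hRsc : ∀ x ξ, (∀ y, R x + ⟪ξ, y - x⟫ ≤ R y) →
      ∀ y, R x + ⟪ξ, y - x⟫ + (μ / 2) * ‖y - x‖ ^ 2 ≤ R y)
    (P : EuclideanSpace ℝ (Fin d) → ℝ) (hP : ∀ x, P x = F x + R x)
    (xstar ξstar : EuclideanSpace ℝ (Fin d))
    (hmin : ∀ x, P xstar ≤ P x)
    (hξ : (∀ y, R xstar + ⟪ξstar, y - xstar⟫ ≤ R y))
    (hopt : gradient F xstar + ξstar = 0) :
    ∀ x : EuclideanSpace ℝ (Fin d),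
      (1 / (n : ℝ)) * ∑ i, (1 / ((n : ℝ) * q i)) *
          ‖gradient (f i) x - gradient (f i) xstar‖ ^ 2 ≤
        2 * Lbar * (P x - P xstar - (μ / 2) * ‖x - xstar‖ ^ 2) := by
  intro x
  haveI : Nonempty (Fin n) := Fin.pos_iff_nonempty.mp hn
  have hn0 : (0:ℝ) < (n:ℝ) := by exact_mod_cast hn
  have hLbarpos : 0 < Lbar := by
    rw [hLbar]
    have : (0:ℝ) < ∑ i, L i := Finset.sum_pos (fun i _ => hL i) Finset.univ_nonempty
    positivity
  set gF : EuclideanSpace ℝ (Fin d) := (1/(n:ℝ)) • ∑ i, gradient (f i) xstar with hgF_def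
  have hgF : HasGradientAt F gF xstar := by
    rw [hasGradientAt_iff_hasFDerivAt]
    have hFeq : F = fun z => (1/(n:ℝ)) * ∑ i, f i z := funext hF
    rw [hFeq, hgF_def, map_smul, map_sum]
    exact HasFDerivAt.const_mul
      (HasFDerivAt.fun_sum fun i _ => ((hdiff i) xstar).hasGradientAt.hasFDerivAt) _
  have hxi : ξstar = -gF := by
    have : gradient F xstar = gF := hgF.gradient
    rw [← this]
    linear_combination (norm := module) hopt
  have hR : R xstar + ⟪ξstar, x - xstar⟫ + μ/2 * ‖x - xstar‖ ^ 2 ≤ R x := hRsc xstar ξstar hξ x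
  set S : Fin n → ℝ := fun i =>
    f i x - f i xstar - ⟪gradient (f i) xstar, x - xstar⟫ with hS_def
  have key : ∀ i, ‖gradient (f i) x - gradient (f i) xstar‖ ^ 2 ≤ 2 * L i * S i := fun i =>
    aux_coco (hconv i) (fun z => ((hdiff i) z).hasGradientAt) (hL i)
      (fun u v => hlip i u v) x xstar
  have hqi : ∀ i, 1/((n:ℝ) * q i) = Lbar / L i := by
    intro i
    have h1 : (n:ℝ) ≠ 0 := hn0.ne'
    have h2 : L i ≠ 0 := (hL i).ne'
    have h3 : Lbar ≠ 0 := hLbarpos.ne'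
    rw [hq i]
    field_simp
  have hterm : ∀ i, (1/((n:ℝ) * q i)) * ‖gradient (f i) x - gradient (f i) xstar‖ ^ 2 ≤
      2 * Lbar * S i := by
    intro i
    rw [hqi i]
    have h1 : Lbar / L i * ‖gradient (f i) x - gradient (f i) xstar‖ ^ 2 ≤
        Lbar / L i * (2 * L i * S i) :=
      mul_le_mul_of_nonneg_left (key i) (div_nonneg hLbarpos.le (hL i).le)
    have h2 : Lbar / L i * (2 * L i * S i) = 2 * Lbar * S i := by
      have : L i ≠ 0 := (hL i).ne'
      field_simp
    linarith
  have hsum : ∑ i, (1/((n:ℝ) * q i)) * ‖gradient (f i) x - gradient (f i) xstar‖ ^ 2 ≤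
      ∑ i, 2 * Lbar * S i :=
    Finset.sum_le_sum fun i _ => hterm i
  have havg : (1/(n:ℝ)) * ∑ i, S i = F x - F xstar - ⟪gF, x - xstar⟫ := by
    rw [hF, hF, hgF_def, real_inner_smul_left, sum_inner]
    simp only [hS_def]
    rw [Finset.sum_sub_distrib, Finset.sum_sub_distrib]
    ring
  have hgap : F x - F xstar - ⟪gF, x - xstar⟫ ≤ P x - P xstar - μ/2 * ‖x - xstar‖ ^ 2 := by
    have hinner : -⟪gF, x - xstar⟫ = ⟪ξstar, x - xstar⟫ := by
      rw [hxi, inner_neg_left]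
    rw [hP, hP]
    have := hR
    rw [← hinner] at this
    linarith
  calc (1 / (n : ℝ)) * ∑ i, (1 / ((n : ℝ) * q i)) *
          ‖gradient (f i) x - gradient (f i) xstar‖ ^ 2
      ≤ (1/(n:ℝ)) * ∑ i, 2 * Lbar * S i :=
        mul_le_mul_of_nonneg_left hsum (by positivity)
    _ = 2 * Lbar * ((1/(n:ℝ)) * ∑ i, S i) := by
        rw [← Finset.mul_sum]; ring
    _ ≤ 2 * Lbar * (P x - P xstar - μ/2 * ‖x - xstar‖ ^ 2) := by
        rw [havg]
        exact mul_le_mul_of_nonneg_left hgap (by positivity)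

theorem gradient_norm_bound_by_objective_gap (d n : ℕ) (hd : 0 < d) (hn : 0 < n)
    (f : Fin n → EuclideanSpace ℝ (Fin d) → ℝ) (L : Fin n → ℝ)
    (hL : ∀ i, 0 < L i)
    (hconv : ∀ i, ConvexOn ℝ Set.univ (f i))
    (hdiff : ∀ i, Differentiable ℝ (f i))
    (hlip : ∀ i x y, ‖gradient (f i) x - gradient (f i) y‖ ≤ L i * ‖x - y‖)
    (Lbar : ℝ) (hLbar : Lbar = (1 / (n : ℝ)) * ∑ i, L i)
    (q : Fin n → ℝ) (hq : ∀ i, q i = L i / ((n : ℝ) * Lbar))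
    (F : EuclideanSpace ℝ (Fin d) → ℝ)
    (hF : ∀ x, F x = (1 / (n : ℝ)) * ∑ i, f i x)
    (R : EuclideanSpace ℝ (Fin d) → ℝ) (μ : ℝ) (hμ : 0 ≤ μ)
    (hRconv : ConvexOn ℝ Set.univ R)
    (hRsc : ∀ x ξ, HasSubgradientAt R ξ x →
      ∀ y, R x + ⟪ξ, y - x⟫ + (μ / 2) * ‖y - x‖ ^ 2 ≤ R y)
    (P : EuclideanSpace ℝ (Fin d) → ℝ) (hP : ∀ x, P x = F x + R x)
    (xstar ξstar : EuclideanSpace ℝ (Fin d))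
    (hmin : ∀ x, P xstar ≤ P x)
    (hξ : HasSubgradientAt R ξstar xstar)
    (hopt : gradient F xstar + ξstar = 0) :
    ∀ x : EuclideanSpace ℝ (Fin d),
      (1 / (n : ℝ)) * ∑ i, (1 / ((n : ℝ) * q i)) *
          ‖gradient (f i) x - gradient (f i) xstar‖ ^ 2 ≤
        2 * Lbar * (P x - P xstar - (μ / 2) * ‖x - xstar‖ ^ 2) := by
  exact gradient_norm_bound_by_objective_gap' d n hd hn f L hL hconv hdiff hlip Lbar hLbar
    q hq F hF R μ hμ hRconv hRsc P hP xstar ξstar hmin hξ hopt
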